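/- Let λ ⊆ (n,n,...,n) be a Young diagram (in English notation, viewed as a subset of [n]²) with Durfee square of size k, let μ be the complement n^n/λ, and let M be an n×n real matrix all of whose minors of size at most k are positive. Then (−1)^{|μ|} det(M|_λ) ≥ 0, with equality only if λ does not contain the staircase (n, n−1, ..., 1). -/

import Mathlib

open Equiv Finset
open scoped Classical

/-- Bruhat order on the symmetric group on `Fin n`, via the rank-matrix
characterization: `v ≤ w` iff every northeast corner count of `v` is at most
that of `w`. -/
def bruhatLE {n : ℕ} (v w : Equiv.Perm (Fin n)) : Prop :=
  ∀ i j : Fin n,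
    (Finset.univ.filter fun k => k ≤ i ∧ j ≤ v k).card ≤
      (Finset.univ.filter fun k => k ≤ i ∧ j ≤ w k).card

/-- Coxeter length = number of inversions. -/
def len {n : ℕ} (v : Equiv.Perm (Fin n)) : ℕ :=
  (Finset.univ.filter fun p : Fin n × Fin n => p.1 < p.2 ∧ v p.2 < v p.1).card

/-- The graph of the Bruhat interval `[v, w]`. -/
def grInt {n : ℕ} (v w : Equiv.Perm (Fin n)) : Set (Fin n × Fin n) :=
  {p | ∃ u : Equiv.Perm (Fin n), bruhatLE v u ∧ bruhatLE u w ∧ u p.1 = p.2}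

/-- Restriction of a matrix to a subset of positions (entries outside are 0). -/
noncomputable def restrict {n : ℕ} (M : Matrix (Fin n) (Fin n) ℝ)
    (Q : Set (Fin n × Fin n)) : Matrix (Fin n) (Fin n) ℝ :=
  fun i j => if (i, j) ∈ Q then M i j else 0

/-- A matrix is `k`-positive if all its minors of size at most `k` are positive. -/
def kPos {n : ℕ} (k : ℕ) (M : Matrix (Fin n) (Fin n) ℝ) : Prop :=
  ∀ m : ℕ, 1 ≤ m → m ≤ k → ∀ f g : Fin m → Fin n, StrictMono f → StrictMono g →
    0 < (M.submatrix f g).det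

open Matrix

/- ### basic helpers -/

def inC {n : ℕ} : Fin n → Fin (n+2) := fun i => i.succ.castSucc
def brd {n : ℕ} : Fin 2 → Fin (n+2) := ![0, Fin.last (n+1)]

lemma inC_val {n : ℕ} (i : Fin n) : (inC i : ℕ) = i + 1 := by simp [inC]
lemma brd_val {n : ℕ} (b : Fin 2) : ((brd (n := n)) b : ℕ) = if b = 0 then 0 else n + 1 := by
  fin_cases b <;> simp [brd]

lemma sum_elim_inj {p q m : ℕ} (f : Fin p → Fin m) (g : Fin q → Fin m)
    (hf : ∀ a b, (f a : ℕ) = f b → a = b)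
    (hg : ∀ a b, (g a : ℕ) = g b → a = b)
    (hfg : ∀ a b, (f a : ℕ) ≠ g b) : Function.Injective (Sum.elim f g) := by
  rintro (a|a) (b|b) h
  · exact congrArg Sum.inl (hf a b (congrArg Fin.val h))
  · exact absurd (congrArg Fin.val h) (hfg a b)
  · exact absurd (congrArg Fin.val h).symm (hfg b a)
  · exact congrArg Sum.inr (hg a b (congrArg Fin.val h))

noncomputable def e2 {n : ℕ} : Fin n ⊕ Fin 2 ≃ Fin (n+2) :=
  Equiv.ofBijective (Sum.elim inC brd) (by
    rw [Fintype.bijective_iff_injective_and_card]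
    refine ⟨sum_elim_inj _ _ ?_ ?_ ?_, by simp⟩
    · intro a b h; rw [inC_val, inC_val] at h; exact Fin.ext (by omega)
    · intro a b h; rw [brd_val, brd_val] at h
      have := a.2; have := b.2
      split at h <;> split at h <;> first | (apply Fin.ext; omega) | omega
    · intro a b; rw [inC_val, brd_val]; have := a.isLt; split <;> omega)

noncomputable def eS {n : ℕ} : Fin n ⊕ Fin 1 ≃ Fin (n+1) :=
  Equiv.ofBijective (Sum.elim Fin.castSucc fun _ => Fin.last n) (by
    rw [Fintype.bijective_iff_injective_and_card]
    refine ⟨sum_elim_inj _ _ ?_ ?_ ?_, by simp⟩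
    · intro a b h; simp only [Fin.coe_castSucc] at h; exact Fin.ext h
    · intro a b _; exact Subsingleton.elim a b
    · intro a b; simp only [Fin.coe_castSucc, Fin.val_last]; exact a.2.ne)

noncomputable def eT {n : ℕ} : Fin n ⊕ Fin 1 ≃ Fin (n+1) :=
  Equiv.ofBijective (Sum.elim Fin.succ fun _ => 0) (by
    rw [Fintype.bijective_iff_injective_and_card]
    refine ⟨sum_elim_inj _ _ ?_ ?_ ?_, by simp⟩
    · intro a b h; simp only [Fin.val_succ] at h; exact Fin.ext (by omega)
    · intro a b _; exact Subsingleton.elim a b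
    · intro a b; simp [Fin.val_succ])

lemma det_submatrix_pair {m m' : Type*} [Fintype m] [Fintype m'] [DecidableEq m]
    [DecidableEq m'] (B C : Matrix m m ℝ) (e f : m' ≃ m) :
    (B.submatrix e f).det * (C.submatrix f e).det = B.det * C.det := by
  rw [← det_mul, ← det_mul, ← det_submatrix_equiv_self e (B * C)]
  congr 1
  ext i j
  simp only [Matrix.mul_apply, Matrix.submatrix_apply]
  exact Equiv.sum_comp f (fun k => B (e i) k * C k (e j))

/-- Desnanot–Jacobi identity, assuming the central minor is nonsingular. -/
lemma dj {n : ℕ} (A : Matrix (Fin (n+2)) (Fin (n+2)) ℝ)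
    (hC : (A.submatrix inC inC).det ≠ 0) :
    A.det * (A.submatrix inC inC).det
      = (A.submatrix Fin.succ Fin.succ).det * (A.submatrix Fin.castSucc Fin.castSucc).det
        - (A.submatrix Fin.succ Fin.castSucc).det * (A.submatrix Fin.castSucc Fin.succ).det := by
  set P := A.submatrix (inC (n := n)) inC with hP
  haveI : Invertible P := P.invertibleOfIsUnitDet (isUnit_iff_ne_zero.2 hC)
  set T : Matrix (Fin 2) (Fin 2) ℝ :=
    A.submatrix brd brd - A.submatrix brd inC * ⅟P * A.submatrix inC brd with hT
  have hA : A.det = P.det * T.det := by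
    rw [← det_submatrix_equiv_self e2 A]
    have : A.submatrix (e2 (n := n)) e2
        = fromBlocks P (A.submatrix inC brd) (A.submatrix brd inC) (A.submatrix brd brd) := by
      ext (a|a) (b|b) <;> rfl
    rw [this, det_fromBlocks₁₁]
  have key : ∀ (f g : Fin (n+1) → Fin (n+2)) (ef eg : Fin n ⊕ Fin 1 ≃ Fin (n+1)) (a b : Fin 2),
      (∀ i, f (ef (Sum.inl i)) = inC i) → (∀ j, g (eg (Sum.inl j)) = inC j) →
      (∀ x, f (ef (Sum.inr x)) = brd a) → (∀ x, g (eg (Sum.inr x)) = brd b) →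
      ((A.submatrix f g).submatrix ef eg).det = P.det * T a b := by
    intro f g ef eg a b hfi hgi hfb hgb
    have hblk : (A.submatrix f g).submatrix ef eg
        = fromBlocks P (fun i (_ : Fin 1) => A (inC i) (brd b))
            (fun (_ : Fin 1) j => A (brd a) (inC j)) (fun _ _ => A (brd a) (brd b)) := by
      ext (i|i) (j|j) <;>
        simp only [Matrix.submatrix_apply, fromBlocks_apply₁₁, fromBlocks_apply₁₂,
          fromBlocks_apply₂₁, fromBlocks_apply₂₂, hfi, hgi, hfb, hgb, hP] <;> rfl
    rw [hblk]
    refine (det_fromBlocks₁₁ _ _ _ _).trans ?_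
    rw [det_fin_one]
    simp only [Matrix.sub_apply, Matrix.mul_apply, Matrix.submatrix_apply, hT]
    rfl
  have hsc : ∀ i : Fin n, Fin.succ (Fin.castSucc i) = inC i := fun i => Fin.succ_castSucc i
  have hcs : ∀ i : Fin n, Fin.castSucc (Fin.succ i) = inC i := fun i => rfl
  have hsl : Fin.succ (Fin.last n) = Fin.last (n+1) := Fin.succ_last n
  have hbrd1 : (brd (n := n)) 1 = Fin.last (n+1) := rfl
  have hX : (A.submatrix Fin.succ Fin.succ).det = P.det * T 1 1 := by
    rw [← det_submatrix_equiv_self eS (A.submatrix Fin.succ Fin.succ)]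
    exact key _ _ eS eS 1 1 hsc hsc (fun _ => by simp [eS, hsl, hbrd1])
      (fun _ => by simp [eS, hsl, hbrd1])
  have hY : (A.submatrix Fin.castSucc Fin.castSucc).det = P.det * T 0 0 := by
    rw [← det_submatrix_equiv_self eT (A.submatrix Fin.castSucc Fin.castSucc)]
    exact key _ _ eT eT 0 0 hcs hcs (fun _ => rfl) (fun _ => rfl)
  have hZW : (A.submatrix Fin.succ Fin.castSucc).det * (A.submatrix Fin.castSucc Fin.succ).det
      = (P.det * T 1 0) * (P.det * T 0 1) := by
    rw [← det_submatrix_pair _ _ eS eT]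
    rw [key _ _ eS eT 1 0 hsc hcs (fun _ => by simp [eS, hsl, hbrd1]) (fun _ => rfl),
      key _ _ eT eS 0 1 hcs hsc (fun _ => rfl) (fun _ => by simp [eS, hsl, hbrd1])]
  rw [hA, hX, hY, hZW, det_fin_two]
  ring

lemma restrict_apply {n : ℕ} (M : Matrix (Fin n) (Fin n) ℝ) (lam : Fin n → ℕ) (i j : Fin n) :
    _root_.restrict M {p : Fin n × Fin n | (p.2 : ℕ) < lam p.1} i j
      = if (j : ℕ) < lam i then M i j else 0 := by
  simp [_root_.restrict, Set.mem_setOf_eq]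

lemma det_restrict_eq_zero {m : ℕ} (M : Matrix (Fin m) (Fin m) ℝ) (lam : Fin m → ℕ)
    (hanti : Antitone lam) (i0 : Fin m) (h : lam i0 < m - (i0 : ℕ)) :
    (restrict M {p : Fin m × Fin m | (p.2 : ℕ) < lam p.1}).det = 0 := by
  rw [Matrix.det_apply]
  refine Finset.sum_eq_zero fun σ _ => ?_
  have hz : ∃ i : Fin m, ¬ ((i : ℕ) < lam (σ i)) := by
    by_contra hall
    push_neg at hall
    have hb : lam i0 < m := lt_of_lt_of_le h (Nat.sub_le _ _)
    have hcard := Finset.card_le_card_of_injOn (σ.symm : Fin m → Fin m)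
      (s := Finset.Ici i0) (t := Finset.Iio (⟨lam i0, hb⟩ : Fin m))
      (fun r hr => by
        have h1 : (σ.symm r : ℕ) < lam (σ (σ.symm r)) := hall (σ.symm r)
        rw [Equiv.apply_symm_apply] at h1
        have h2 : lam r ≤ lam i0 := hanti (Finset.mem_Ici.1 hr)
        exact Finset.mem_Iio.2 (by rw [Fin.lt_def]; exact lt_of_lt_of_le h1 h2))
      (fun a _ b _ hab => σ.symm.injective hab)
    rw [Fin.card_Ici, Fin.card_Iio] at hcard
    have hv : ((⟨lam i0, hb⟩ : Fin m) : ℕ) = lam i0 := rfl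
    rw [hv] at hcard
    omega
  obtain ⟨i, hi⟩ := hz
  have : _root_.restrict M {p : Fin m × Fin m | (p.2 : ℕ) < lam p.1} (σ i) i = 0 := by
    rw [restrict_apply, if_neg hi]
  exact smul_eq_zero_of_right _ (Finset.prod_eq_zero (Finset.mem_univ i) this)

lemma kPos_submatrix {n m : ℕ} (k : ℕ) (M : Matrix (Fin n) (Fin n) ℝ) (hM : kPos k M)
    (f g : Fin m → Fin n) (hf : StrictMono f) (hg : StrictMono g) :
    kPos k (M.submatrix f g) := by
  intro p hp1 hpk f' g' hf' hg'
  rw [Matrix.submatrix_submatrix]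
  exact hM p hp1 hpk _ _ (hf.comp hf') (hg.comp hg')

lemma restrict_submatrix {n m : ℕ} (M : Matrix (Fin n) (Fin n) ℝ) (lam : Fin n → ℕ)
    (nu : Fin m → ℕ) (f g : Fin m → Fin n)
    (hcompat : ∀ (i j : Fin m), ((g j : ℕ) < lam (f i) ↔ (j : ℕ) < nu i)) :
    (restrict M {p : Fin n × Fin n | (p.2 : ℕ) < lam p.1}).submatrix f g
      = restrict (M.submatrix f g) {p : Fin m × Fin m | (p.2 : ℕ) < nu p.1} := by
  ext i j
  rw [Matrix.submatrix_apply, restrict_apply, restrict_apply, Matrix.submatrix_apply]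
  by_cases h : (j : ℕ) < nu i
  · rw [if_pos ((hcompat i j).2 h), if_pos h]
  · rw [if_neg (fun hc => h ((hcompat i j).1 hc)), if_neg h]

/- ### shapes for the induction -/

def nuY {N : ℕ} (lam : Fin (N+2) → ℕ) : Fin (N+1) → ℕ := fun i => min (lam i.castSucc) (N+1)
def nuX {N : ℕ} (lam : Fin (N+2) → ℕ) : Fin (N+1) → ℕ := fun i => lam i.succ - 1
def nuZ {N : ℕ} (lam : Fin (N+2) → ℕ) : Fin (N+1) → ℕ := fun i => min (lam i.succ) (N+1)
def nuW {N : ℕ} (lam : Fin (N+2) → ℕ) : Fin (N+1) → ℕ := fun i => lam i.castSucc - 1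
def nuCc {N : ℕ} (lam : Fin (N+2) → ℕ) : Fin N → ℕ := fun i => min (lam (inC i)) (N+1) - 1

lemma durfee_transfer {N k : ℕ} (lam : Fin (N+2) → ℕ) (nu : Fin (N+1) → ℕ)
    (hpt : ∀ i : Fin (N+1), nu i ≤ lam i.castSucc)
    (hk : ∀ m : ℕ, m ≤ N+2 → (∀ i : Fin (N+2), (i : ℕ) < m → m ≤ lam i) → m ≤ k) :
    ∀ m : ℕ, m ≤ N+1 → (∀ i : Fin (N+1), (i : ℕ) < m → m ≤ nu i) → m ≤ k := by
  intro m hm hprop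
  refine hk m (by omega) (fun i hi => ?_)
  have hiN : (i : ℕ) < N+1 := by omega
  have h1 : m ≤ nu ⟨(i : ℕ), hiN⟩ := hprop ⟨(i : ℕ), hiN⟩ hi
  have h2 := hpt ⟨(i : ℕ), hiN⟩
  have hcast : (⟨(i : ℕ), hiN⟩ : Fin (N+1)).castSucc = i := Fin.ext rfl
  rw [hcast] at h2
  omega

lemma durfee_transfer2 {N k : ℕ} (lam : Fin (N+2) → ℕ) (nu : Fin N → ℕ)
    (hpt : ∀ i : Fin N, nu i ≤ lam (Fin.castSucc (Fin.castSucc i)))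
    (hk : ∀ m : ℕ, m ≤ N+2 → (∀ i : Fin (N+2), (i : ℕ) < m → m ≤ lam i) → m ≤ k) :
    ∀ m : ℕ, m ≤ N → (∀ i : Fin N, (i : ℕ) < m → m ≤ nu i) → m ≤ k := by
  intro m hm hprop
  refine hk m (by omega) (fun i hi => ?_)
  have hiN : (i : ℕ) < N := by omega
  have h1 : m ≤ nu ⟨(i : ℕ), hiN⟩ := hprop ⟨(i : ℕ), hiN⟩ hi
  have h2 := hpt ⟨(i : ℕ), hiN⟩
  have hcast : Fin.castSucc (Fin.castSucc (⟨(i : ℕ), hiN⟩ : Fin N)) = i := Fin.ext rfl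
  rw [hcast] at h2
  omega

/- ### the main positivity lemma -/

lemma main_pos : ∀ (n : ℕ) (k : ℕ) (M : Matrix (Fin n) (Fin n) ℝ) (lam : Fin n → ℕ),
    Antitone lam → (∀ i, lam i ≤ n) → (∀ i : Fin n, n - (i : ℕ) ≤ lam i) →
    (∀ m : ℕ, m ≤ n → (∀ i : Fin n, (i : ℕ) < m → m ≤ lam i) → m ≤ k) →
    kPos k M →
    0 < (-1 : ℝ) ^ (n * n - ∑ i, lam i) *
        (restrict M {p : Fin n × Fin n | (p.2 : ℕ) < lam p.1}).det := by
  intro n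
  induction n using Nat.strong_induction_on with
  | _ n IH =>
  cases n with
  | zero =>
    intro k M lam _ _ _ _ _
    norm_num [Matrix.det_fin_zero]
  | succ n1 =>
  cases n1 with
  | zero =>
    intro k M lam hanti hle hstair hk hM
    show 0 < (-1 : ℝ) ^ (1 * 1 - ∑ i : Fin 1, lam i) *
        (restrict M {p : Fin 1 × Fin 1 | (p.2 : ℕ) < lam p.1}).det
    have h0 : lam 0 = 1 := le_antisymm (hle 0) (by simpa using hstair 0)
    have hk1 : 1 ≤ k := hk 1 le_rfl (fun i _ => by
      have hi : (i : ℕ) = 0 := by omega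
      have h2 := hstair i
      omega)
    have hpos := hM 1 le_rfl hk1 id id strictMono_id strictMono_id
    rw [Matrix.submatrix_id_id] at hpos
    have hdet : (restrict M {p : Fin 1 × Fin 1 | (p.2 : ℕ) < lam p.1}).det = M.det := by
      congr 1
      ext i j
      have hj : (j : ℕ) < lam i := by
        have h1 := hstair i
        have h2 := j.isLt
        omega
      rw [restrict_apply, if_pos hj]
    have hsum : ∑ i : Fin 1, lam i = 1 := by rw [Fin.sum_univ_one, h0]
    rw [hsum, hdet]
    norm_num
    exact hpos
  | succ N =>
    intro k M lam hanti hle hstair hk hM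
    show 0 < (-1 : ℝ) ^ ((N+2) * (N+2) - ∑ i : Fin (N+2), lam i) *
        (restrict M {p : Fin (N+2) × Fin (N+2) | (p.2 : ℕ) < lam p.1}).det
    by_cases hfull : ∀ i : Fin (N+2), lam i = N+2
    · have hres : restrict M {p : Fin (N+2) × Fin (N+2) | (p.2 : ℕ) < lam p.1} = M := by
        ext i j
        rw [restrict_apply, if_pos (by rw [hfull i]; exact j.isLt)]
      have hsum : ∑ i : Fin (N+2), lam i = (N+2)*(N+2) := by
        rw [Finset.sum_congr rfl (fun i _ => hfull i), Finset.sum_const]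
        simp [Finset.card_univ]
      have hkn : N+2 ≤ k := hk (N+2) le_rfl (fun i _ => le_of_eq (hfull i).symm)
      have hpos := hM (N+2) (by omega) hkn id id strictMono_id strictMono_id
      rw [Matrix.submatrix_id_id] at hpos
      rw [hres, hsum, Nat.sub_self, pow_zero, one_mul]
      exact hpos
    · push_neg at hfull
      obtain ⟨iw, hiw⟩ := hfull
      have hfirst : lam 0 = N+2 := by
        have h1 := hstair 0
        have h2 := hle 0
        simp only [Fin.val_zero, Nat.sub_zero] at h1
        omega
      have hlast : lam (Fin.last (N+1)) ≤ N+1 := by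
        have h1 : lam (Fin.last (N+1)) ≤ lam iw := hanti (Fin.le_last iw)
        have h2 := hle iw
        omega
      have hlast1 : 1 ≤ lam (Fin.last (N+1)) := by
        have h1 := hstair (Fin.last (N+1))
        rw [Fin.val_last] at h1
        omega
      set A := restrict M {p : Fin (N+2) × Fin (N+2) | (p.2 : ℕ) < lam p.1} with hA
      -- ### shape Y (remove last row, last column)
      have hYanti : Antitone (nuY lam) := fun a b hab =>
        min_le_min (hanti (Fin.strictMono_castSucc.monotone hab)) le_rfl
      have hYle : ∀ i, nuY lam i ≤ N+1 := fun i => min_le_right _ _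
      have hYstair : ∀ i : Fin (N+1), (N+1) - (i : ℕ) ≤ nuY lam i := fun i => by
        have h1 := hstair i.castSucc
        rw [Fin.coe_castSucc] at h1
        have h2 := i.isLt
        simp only [nuY]
        omega
      have hYdurfee := durfee_transfer lam (nuY lam) (fun i => min_le_left _ _) hk
      have hYpos := IH (N+1) (by omega) k (M.submatrix Fin.castSucc Fin.castSucc) (nuY lam)
        hYanti hYle hYstair hYdurfee
        (kPos_submatrix k M hM _ _ Fin.strictMono_castSucc Fin.strictMono_castSucc)
      have hYeq : A.submatrix Fin.castSucc Fin.castSucc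
          = restrict (M.submatrix Fin.castSucc Fin.castSucc)
              {p : Fin (N+1) × Fin (N+1) | (p.2 : ℕ) < nuY lam p.1} := by
        rw [hA]
        refine restrict_submatrix _ _ _ _ _ (fun i j => ?_)
        rw [Fin.coe_castSucc]
        have := j.isLt
        simp only [nuY]
        omega
      -- ### shape X (remove first row, first column)
      have hXanti : Antitone (nuX lam) := fun a b hab =>
        Nat.sub_le_sub_right (hanti (Fin.strictMono_succ.monotone hab)) 1
      have hXle : ∀ i, nuX lam i ≤ N+1 := fun i => by
        have := hle i.succ
        simp only [nuX]
        omega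
      have hXdurfee := durfee_transfer lam (nuX lam)
        (fun i => le_trans (Nat.sub_le _ _) (hanti (Fin.castSucc_le_succ i))) hk
      have hXeq : A.submatrix Fin.succ Fin.succ
          = restrict (M.submatrix Fin.succ Fin.succ)
              {p : Fin (N+1) × Fin (N+1) | (p.2 : ℕ) < nuX lam p.1} := by
        rw [hA]
        refine restrict_submatrix _ _ _ _ _ (fun i j => ?_)
        rw [Fin.val_succ]
        have := j.isLt
        simp only [nuX]
        omega
      -- ### shape Z (remove first row, last column)
      have hZanti : Antitone (nuZ lam) := fun a b hab =>
        min_le_min (hanti (Fin.strictMono_succ.monotone hab)) le_rfl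
      have hZle : ∀ i, nuZ lam i ≤ N+1 := fun i => min_le_right _ _
      have hZstair : ∀ i : Fin (N+1), (N+1) - (i : ℕ) ≤ nuZ lam i := fun i => by
        have h1 := hstair i.succ
        rw [Fin.val_succ] at h1
        have h2 := i.isLt
        simp only [nuZ]
        omega
      have hZdurfee := durfee_transfer lam (nuZ lam)
        (fun i => le_trans (min_le_left _ _) (hanti (Fin.castSucc_le_succ i))) hk
      have hZpos := IH (N+1) (by omega) k (M.submatrix Fin.succ Fin.castSucc) (nuZ lam)
        hZanti hZle hZstair hZdurfee
        (kPos_submatrix k M hM _ _ Fin.strictMono_succ Fin.strictMono_castSucc)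
      have hZeq : A.submatrix Fin.succ Fin.castSucc
          = restrict (M.submatrix Fin.succ Fin.castSucc)
              {p : Fin (N+1) × Fin (N+1) | (p.2 : ℕ) < nuZ lam p.1} := by
        rw [hA]
        refine restrict_submatrix _ _ _ _ _ (fun i j => ?_)
        rw [Fin.coe_castSucc]
        have := j.isLt
        simp only [nuZ]
        omega
      -- ### shape W (remove last row, first column)
      have hWanti : Antitone (nuW lam) := fun a b hab =>
        Nat.sub_le_sub_right (hanti (Fin.strictMono_castSucc.monotone hab)) 1
      have hWle : ∀ i, nuW lam i ≤ N+1 := fun i => by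
        have := hle i.castSucc
        simp only [nuW]
        omega
      have hWstair : ∀ i : Fin (N+1), (N+1) - (i : ℕ) ≤ nuW lam i := fun i => by
        have h1 := hstair i.castSucc
        rw [Fin.coe_castSucc] at h1
        have h2 := i.isLt
        simp only [nuW]
        omega
      have hWdurfee := durfee_transfer lam (nuW lam)
        (fun i => Nat.sub_le _ _) hk
      have hWpos := IH (N+1) (by omega) k (M.submatrix Fin.castSucc Fin.succ) (nuW lam)
        hWanti hWle hWstair hWdurfee
        (kPos_submatrix k M hM _ _ Fin.strictMono_castSucc Fin.strictMono_succ)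
      have hWeq : A.submatrix Fin.castSucc Fin.succ
          = restrict (M.submatrix Fin.castSucc Fin.succ)
              {p : Fin (N+1) × Fin (N+1) | (p.2 : ℕ) < nuW lam p.1} := by
        rw [hA]
        refine restrict_submatrix _ _ _ _ _ (fun i j => ?_)
        rw [Fin.val_succ]
        have := j.isLt
        simp only [nuW]
        omega
      -- ### central shape
      have hCanti : Antitone (nuCc lam) := fun a b hab => by
        have : inC a ≤ inC b := (Fin.strictMono_castSucc.comp Fin.strictMono_succ).monotone hab
        exact Nat.sub_le_sub_right (min_le_min (hanti this) le_rfl) 1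
      have hCle : ∀ i, nuCc lam i ≤ N := fun i => by
        have : min (lam (inC i)) (N+1) ≤ N+1 := min_le_right _ _
        simp only [nuCc]
        omega
      have hCstair : ∀ i : Fin N, N - (i : ℕ) ≤ nuCc lam i := fun i => by
        have h1 := hstair (inC i)
        rw [inC_val] at h1
        have h2 := i.isLt
        simp only [nuCc]
        omega
      have hCdurfee := durfee_transfer2 lam (nuCc lam)
        (fun i => by
          have hle2 : Fin.castSucc (Fin.castSucc i) ≤ inC i := by
            rw [Fin.le_def, inC_val]
            simp
          exact le_trans (le_trans (Nat.sub_le _ _) (min_le_left _ _)) (hanti hle2)) hk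
      have hCpos := IH N (by omega) k (M.submatrix inC inC) (nuCc lam)
        hCanti hCle hCstair hCdurfee
        (kPos_submatrix k M hM _ _ (Fin.strictMono_castSucc.comp Fin.strictMono_succ)
          (Fin.strictMono_castSucc.comp Fin.strictMono_succ))
      have hCeq : A.submatrix inC inC
          = restrict (M.submatrix inC inC)
              {p : Fin N × Fin N | (p.2 : ℕ) < nuCc lam p.1} := by
        rw [hA]
        refine restrict_submatrix _ _ _ _ _ (fun i j => ?_)
        rw [inC_val]
        have := j.isLt
        simp only [nuCc]
        omega
      -- ### sums bookkeeping
      set SL := ∑ i, lam i with hSLdef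
      set SY := ∑ i, nuY lam i with hSYdef
      set SX := ∑ i, nuX lam i with hSXdef
      set SZ := ∑ i, nuZ lam i with hSZdef
      set SW := ∑ i, nuW lam i with hSWdef
      set SC := ∑ i, nuCc lam i with hSCdef
      have hr1 : SX + (N+1) + (N+2) = SL := by
        have h1 : SL = lam 0 + ∑ i : Fin (N+1), lam i.succ := Fin.sum_univ_succ lam
        have h2 : ∑ i : Fin (N+1), lam i.succ = ∑ i : Fin (N+1), (nuX lam i + 1) :=
          Finset.sum_congr rfl (fun i _ => by
            have h3 := hstair i.succ
            rw [Fin.val_succ] at h3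
            have h4 := i.isLt
            simp only [nuX]
            omega)
        rw [h2, Finset.sum_add_distrib] at h1
        simp only [Finset.sum_const, Finset.card_univ, Fintype.card_fin, smul_eq_mul,
          mul_one] at h1
        omega
      have hr2 : SY = SC + N + (N+1) := by
        have h1 : SY = nuY lam 0 + ∑ i : Fin N, nuY lam i.succ := Fin.sum_univ_succ (nuY lam)
        have h2 : nuY lam 0 = N+1 := by
          simp only [nuY, Fin.castSucc_zero, hfirst]
          omega
        have h3 : ∑ i : Fin N, nuY lam i.succ = ∑ i : Fin N, (nuCc lam i + 1) :=
          Finset.sum_congr rfl (fun i _ => by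
            have h4 := hstair (inC i)
            rw [inC_val] at h4
            simp only [inC] at h4
            have h5 := i.isLt
            simp only [nuY, nuCc, inC]
            omega)
        rw [h2, h3, Finset.sum_add_distrib] at h1
        simp only [Finset.sum_const, Finset.card_univ, Fintype.card_fin, smul_eq_mul,
          mul_one] at h1
        omega
      have hr3 : SZ = SC + N + lam (Fin.last (N+1)) := by
        have h1 : SZ = ∑ i : Fin N, nuZ lam i.castSucc + nuZ lam (Fin.last N) :=
          Fin.sum_univ_castSucc (nuZ lam)
        have h2 : ∑ i : Fin N, nuZ lam i.castSucc = ∑ i : Fin N, (nuCc lam i + 1) :=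
          Finset.sum_congr rfl (fun i _ => by
            have h4 := hstair (inC i)
            rw [inC_val] at h4
            simp only [inC] at h4
            have h5 := i.isLt
            simp only [nuZ, nuCc, inC, Fin.succ_castSucc]
            omega)
        have h3 : nuZ lam (Fin.last N) = lam (Fin.last (N+1)) := by
          simp only [nuZ, Fin.succ_last]
          exact min_eq_left hlast
        rw [h2, h3, Finset.sum_add_distrib] at h1
        simp only [Finset.sum_const, Finset.card_univ, Fintype.card_fin, smul_eq_mul,
          mul_one] at h1
        omega
      have hr4 : SW + lam (Fin.last (N+1)) + (N+1) = SL := by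
        have h1 : SL = ∑ i : Fin (N+1), lam i.castSucc + lam (Fin.last (N+1)) :=
          Fin.sum_univ_castSucc lam
        have h2 : ∑ i : Fin (N+1), lam i.castSucc = ∑ i : Fin (N+1), (nuW lam i + 1) :=
          Finset.sum_congr rfl (fun i _ => by
            have h3 := hstair i.castSucc
            rw [Fin.coe_castSucc] at h3
            have h4 := i.isLt
            simp only [nuW]
            omega)
        rw [h2, Finset.sum_add_distrib] at h1
        simp only [Finset.sum_const, Finset.card_univ, Fintype.card_fin, smul_eq_mul,
          mul_one] at h1
        omega
      have hSLle : SL ≤ (N+2)*(N+2) := by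
        calc SL ≤ ∑ _i : Fin (N+2), (N+2) := Finset.sum_le_sum (fun i _ => hle i)
        _ = (N+2)*(N+2) := by
          simp [Finset.sum_const, Finset.card_univ]
      have hSCle : SC ≤ N*N := by
        calc SC ≤ ∑ _i : Fin N, N := Finset.sum_le_sum (fun i _ => hCle i)
        _ = N*N := by simp [Finset.sum_const, Finset.card_univ]
      have hSXle : SX ≤ (N+1)*(N+1) := by
        calc SX ≤ ∑ _i : Fin (N+1), (N+1) := Finset.sum_le_sum (fun i _ => hXle i)
        _ = (N+1)*(N+1) := by simp [Finset.sum_const, Finset.card_univ]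
      have hSYle : SY ≤ (N+1)*(N+1) := by
        calc SY ≤ ∑ _i : Fin (N+1), (N+1) := Finset.sum_le_sum (fun i _ => hYle i)
        _ = (N+1)*(N+1) := by simp [Finset.sum_const, Finset.card_univ]
      have hSZle : SZ ≤ (N+1)*(N+1) := by
        calc SZ ≤ ∑ _i : Fin (N+1), (N+1) := Finset.sum_le_sum (fun i _ => hZle i)
        _ = (N+1)*(N+1) := by simp [Finset.sum_const, Finset.card_univ]
      have hSWle : SW ≤ (N+1)*(N+1) := by
        calc SW ≤ ∑ _i : Fin (N+1), (N+1) := Finset.sum_le_sum (fun i _ => hWle i)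
        _ = (N+1)*(N+1) := by simp [Finset.sum_const, Finset.card_univ]
      -- ### determinants
      set Cd := (restrict (M.submatrix inC inC)
        {p : Fin N × Fin N | (p.2 : ℕ) < nuCc lam p.1}).det with hCd
      set X := (restrict (M.submatrix Fin.succ Fin.succ)
        {p : Fin (N+1) × Fin (N+1) | (p.2 : ℕ) < nuX lam p.1}).det with hXd
      set Y := (restrict (M.submatrix Fin.castSucc Fin.castSucc)
        {p : Fin (N+1) × Fin (N+1) | (p.2 : ℕ) < nuY lam p.1}).det with hYd
      set Z := (restrict (M.submatrix Fin.succ Fin.castSucc)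
        {p : Fin (N+1) × Fin (N+1) | (p.2 : ℕ) < nuZ lam p.1}).det with hZd
      set W := (restrict (M.submatrix Fin.castSucc Fin.succ)
        {p : Fin (N+1) × Fin (N+1) | (p.2 : ℕ) < nuW lam p.1}).det with hWd
      have hCne : (A.submatrix inC inC).det ≠ 0 := by
        rw [hCeq, ← hCd]
        intro h
        rw [h, mul_zero] at hCpos
        exact lt_irrefl 0 hCpos
      have hdj := dj A hCne
      rw [hCeq, hXeq, hYeq, hZeq, hWeq, ← hCd, ← hXd, ← hYd, ← hZd, ← hWd] at hdj
      -- X is nonnegative after signing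
      have hPX : 0 ≤ (-1 : ℝ) ^ ((N+1)*(N+1) - SX) * X := by
        by_cases hXstair : ∀ i : Fin (N+1), (N+1) - (i : ℕ) ≤ nuX lam i
        · exact (IH (N+1) (by omega) k (M.submatrix Fin.succ Fin.succ) (nuX lam)
            hXanti hXle hXstair hXdurfee
            (kPos_submatrix k M hM _ _ Fin.strictMono_succ Fin.strictMono_succ)).le
        · push_neg at hXstair
          obtain ⟨i0, hi0⟩ := hXstair
          rw [hXd, det_restrict_eq_zero _ _ hXanti i0 hi0, mul_zero]
      -- exponent identities
      set Q2 := (N+2)*(N+2) with hQ2def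
      set Q1 := (N+1)*(N+1) with hQ1def
      set Q0 := N*N with hQ0def
      have hsq1 : Q2 = Q1 + (2*N+3) := by rw [hQ2def, hQ1def]; ring
      have hsq2 : Q1 = Q0 + (2*N+1) := by rw [hQ1def, hQ0def]; ring
      set eA := Q2 - SL with heA
      set eC := Q0 - SC with heC
      set eZ := Q1 - SZ with heZ
      set eW := Q1 - SW with heW
      have hEX : Q1 - SX = eA := by rw [heA]; omega
      have hEY : Q1 - SY = eC := by rw [heC]; omega
      rw [hEX] at hPX
      rw [hEY] at hYpos
      have hodd : Odd (eA + eC + eZ + eW) := by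
        rw [Nat.odd_iff, heA, heC, heZ, heW]
        omega
      have hparity : (-1 : ℝ) ^ eA * (-1) ^ eC = -((-1 : ℝ) ^ eZ * (-1) ^ eW) := by
        rw [← pow_add, ← pow_add]
        rcases Nat.even_or_odd (eA + eC) with h | h
        · have h2 : Odd (eZ + eW) := by
            rw [Nat.odd_iff]
            rw [Nat.even_iff] at h
            rw [Nat.odd_iff] at hodd
            omega
          rw [h.neg_one_pow, h2.neg_one_pow, neg_neg]
        · have h2 : Even (eZ + eW) := by
            rw [Nat.even_iff]
            rw [Nat.odd_iff] at h
            rw [Nat.odd_iff] at hodd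
            omega
          rw [h.neg_one_pow, h2.neg_one_pow]
      have hkey : ((-1 : ℝ) ^ eA * A.det) * ((-1) ^ eC * Cd)
          = ((-1) ^ eA * X) * ((-1) ^ eC * Y) + ((-1) ^ eZ * Z) * ((-1) ^ eW * W) := by
        have h1 : ((-1 : ℝ) ^ eA * A.det) * ((-1) ^ eC * Cd)
            = ((-1) ^ eA * (-1) ^ eC) * (A.det * Cd) := by ring
        rw [h1, hdj, mul_sub]
        have h2 : ((-1 : ℝ) ^ eA * (-1) ^ eC) * (Z * W)
            = -(((-1) ^ eZ * Z) * ((-1) ^ eW * W)) := by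
          rw [hparity]; ring
        rw [h2]
        ring
      have hposRHS : 0 < ((-1 : ℝ) ^ eA * X) * ((-1) ^ eC * Y)
          + ((-1) ^ eZ * Z) * ((-1) ^ eW * W) :=
        add_pos_of_nonneg_of_pos (mul_nonneg hPX hYpos.le) (mul_pos hZpos hWpos)
      have hAC : 0 < ((-1 : ℝ) ^ eA * A.det) * ((-1) ^ eC * Cd) := by
        rw [hkey]; exact hposRHS
      show 0 < (-1 : ℝ) ^ eA * A.det
      by_contra hcon
      push_neg at hcon
      have hnn : 0 ≤ -((-1 : ℝ) ^ eA * A.det) * ((-1) ^ eC * Cd) :=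
        mul_nonneg (neg_nonneg.mpr hcon) hCpos.le
      linarith


/-- Sign of the determinant of a `k`-positive matrix restricted to a Young
diagram `λ ⊆ n^n` with Durfee square of size `k`: `(-1)^{|μ|} det(M|_λ) ≥ 0`,
with equality only if `λ` does not contain the staircase `(n, n-1, ..., 1)`. -/
theorem det_restrict_youngDiagram_sign {n k : ℕ} (lam : Fin n → ℕ)
    (hanti : Antitone lam) (hle : ∀ i, lam i ≤ n)
    (hDurfee : IsGreatest {m | m ≤ n ∧ ∀ i : Fin n, (i : ℕ) < m → m ≤ lam i} k)
    (M : Matrix (Fin n) (Fin n) ℝ) (hM : kPos k M) :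
    0 ≤ (-1 : ℝ) ^ (n * n - ∑ i, lam i) *
        (restrict M {p : Fin n × Fin n | (p.2 : ℕ) < lam p.1}).det ∧
      ((-1 : ℝ) ^ (n * n - ∑ i, lam i) *
          (restrict M {p : Fin n × Fin n | (p.2 : ℕ) < lam p.1}).det = 0 →
        ¬ ∀ i : Fin n, n - (i : ℕ) ≤ lam i) := by
  by_cases hstair : ∀ i : Fin n, n - (i : ℕ) ≤ lam i
  · have hpos := main_pos n k M lam hanti hle hstair
      (fun m hm hprop => hDurfee.2 ⟨hm, hprop⟩) hM
    exact ⟨hpos.le, fun h0 => absurd h0 (ne_of_gt hpos)⟩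
  · push_neg at hstair
    obtain ⟨i0, hi0⟩ := hstair
    have hz := det_restrict_eq_zero M lam hanti i0 hi0
    rw [hz, mul_zero]
    refine ⟨le_refl 0, fun _ hall => ?_⟩
    exact absurd (hall i0) (by omega)
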